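/- arXiv:2009.02640 — 6 statements merged into one kernel-verified Lean document; each statement's English description precedes it below -/
import Mathlib

section
/- Let p_1 < p_2 < ... be the primes in increasing order, and for n ≥ 0 define the partial Euler product Q_n(s) = ∏_{k=1}^{n} (1 - p_k^{-s})^{-1} (with Q_0(s) = 1). Then for every n ≥ 0, the limit as real s → ∞ of (1 - Q_n(s)/ζ(s))^{-1/s} equals p_{n+1}. -/
open Filter Topology

noncomputable def realZeta (s : ℝ) : ℝ := ∑' n : ℕ, ((n : ℝ) + 1) ^ (-s)

/-- `nthPrime k` is the `(k+1)`-st prime, i.e. `p_{k+1}`; so `nthPrime 0 = 2`. -/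
noncomputable def nthPrime (k : ℕ) : ℕ := Nat.nth Nat.Prime k

/-- Partial Euler product `Q_n(s) = ∏_{k=1}^n (1 - p_k^{-s})⁻¹`. -/
noncomputable def Qpartial (n : ℕ) (s : ℝ) : ℝ :=
  ∏ k ∈ Finset.range n, (1 - ((nthPrime k : ℝ)) ^ (-s))⁻¹

noncomputable def fmh (s : ℝ) : ℕ →* ℝ where
  toFun m := (m : ℝ) ^ (-s)
  map_one' := by simp
  map_mul' m k := by
    push_cast
    exact Real.mul_rpow (by positivity) (by positivity)
lemma fmh_summable {s : ℝ} (hs : 1 < s) : Summable (fmh s) :=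
  Real.summable_nat_rpow.mpr (by linarith)
lemma fmh_apply (s : ℝ) (m : ℕ) : fmh s m = (m : ℝ) ^ (-s) := rfl
lemma fmh_nonneg (s : ℝ) (m : ℕ) : 0 ≤ fmh s m := by
  rw [fmh_apply]; positivity

lemma zsummable {s : ℝ} (hs : 1 < s) : Summable (fun m : ℕ => ((m : ℝ) + 1) ^ (-s)) := by
  have := (fmh_summable hs).comp_injective (Nat.succ_injective)
  refine this.congr fun m => ?_
  simp [Function.comp, fmh_apply, Nat.succ_eq_add_one]

lemma realZeta_eq {s : ℝ} (hs : 1 < s) : realZeta s = ∑' m : ℕ, fmh s m := by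
  rw [Summable.tsum_eq_zero_add (fmh_summable hs)]
  have h0 : fmh s 0 = 0 := by
    rw [fmh_apply, Nat.cast_zero]
    exact Real.zero_rpow (by linarith)
  rw [h0, zero_add, realZeta]
  congr 1
  ext m
  simp [fmh_apply]

lemma realZeta_ge_one {s : ℝ} (hs : 1 < s) : 1 ≤ realZeta s := by
  have h := Summable.le_tsum (zsummable hs) 0 (fun j _ => by positivity)
  simpa [realZeta] using h

lemma realZeta_le {s : ℝ} (hs : 2 ≤ s) : realZeta s ≤ realZeta 2 := by
  refine Summable.tsum_le_tsum (fun m => ?_) (zsummable (by linarith)) (zsummable one_lt_two)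
  exact Real.rpow_le_rpow_of_exponent_le (by simp [le_add_iff_nonneg_left]) (by linarith)

lemma primesBelow_nthPrime (n : ℕ) :
    Nat.primesBelow (nthPrime n) = (Finset.range n).image nthPrime := by
  ext q
  simp only [Nat.mem_primesBelow, Finset.mem_image, Finset.mem_range, nthPrime]
  constructor
  · rintro ⟨hlt, hq⟩
    refine ⟨Nat.count Nat.Prime q, ?_, Nat.nth_count hq⟩
    rw [← Nat.nth_lt_nth Nat.infinite_setOf_prime, Nat.nth_count hq]
    exact hlt
  · rintro ⟨k, hk, rfl⟩
    exact ⟨(Nat.nth_lt_nth Nat.infinite_setOf_prime).2 hk, Nat.prime_nth_prime k⟩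

lemma Q_eq_tsum (n : ℕ) {s : ℝ} (hs : 1 < s) :
    Qpartial n s = ∑' m : (Nat.smoothNumbers (nthPrime n)), fmh s m := by
  rw [← EulerProduct.prod_primesBelow_geometric_eq_tsum_smoothNumbers (fmh_summable hs),
    primesBelow_nthPrime, Finset.prod_image]
  · rfl
  · intro a _ b _ h
    exact Nat.nth_injective Nat.infinite_setOf_prime h

lemma zeta_split (n : ℕ) {s : ℝ} (hs : 1 < s) :
    realZeta s = Qpartial n s
      + ∑' m : ↥(Nat.smoothNumbers (nthPrime n))ᶜ, fmh s m := by
  rw [realZeta_eq hs, Q_eq_tsum n hs,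
    ← Summable.tsum_subtype_add_tsum_subtype_compl (fmh_summable hs) (Nat.smoothNumbers (nthPrime n))]

lemma nthPrime_not_smooth (n : ℕ) : nthPrime n ∉ Nat.smoothNumbers (nthPrime n) := by
  intro h
  rcases Nat.mem_smoothNumbers.mp h with ⟨h0, h1⟩
  have hp : (nthPrime n).Prime := Nat.prime_nth_prime n
  have := h1 (nthPrime n) (by rw [Nat.primeFactorsList_prime hp]; simp)
  exact lt_irrefl _ this

lemma B_lower (n : ℕ) {s : ℝ} (hs : 1 < s) :
    ((nthPrime n : ℝ)) ^ (-s) ≤ ∑' m : ↥(Nat.smoothNumbers (nthPrime n))ᶜ, fmh s m := by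
  have hmem : nthPrime n ∈ (Nat.smoothNumbers (nthPrime n))ᶜ := nthPrime_not_smooth n
  have := Summable.le_tsum ((fmh_summable hs).subtype _) (⟨nthPrime n, hmem⟩ : ↥(Nat.smoothNumbers (nthPrime n))ᶜ)
    (fun j _ => fmh_nonneg s j)
  exact this

lemma B_upper (n : ℕ) {s : ℝ} (hs : 2 ≤ s) :
    ∑' m : ↥(Nat.smoothNumbers (nthPrime n))ᶜ, fmh s m
      ≤ realZeta 2 * ((nthPrime n : ℝ)) ^ (2 - s) := by
  have hp : (nthPrime n).Prime := Nat.prime_nth_prime n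
  have hp0 : (0:ℝ) < (nthPrime n : ℝ) := by exact_mod_cast hp.pos
  have hs1 : (1:ℝ) < s := by linarith
  have hsum2 : Summable (fun m : ℕ => ((nthPrime n : ℝ)) ^ (2 - s) * (m : ℝ) ^ (-(2:ℝ))) :=
    (Real.summable_nat_rpow.mpr (by norm_num)).mul_left _
  rw [tsum_subtype]
  have hle : ∀ m : ℕ, ((Nat.smoothNumbers (nthPrime n))ᶜ).indicator (fmh s) m
      ≤ ((nthPrime n : ℝ)) ^ (2 - s) * (m : ℝ) ^ (-(2:ℝ)) := by
    intro m
    by_cases hm : m ∈ (Nat.smoothNumbers (nthPrime n))ᶜ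
    · rw [Set.indicator_of_mem hm, fmh_apply]
      rcases eq_or_ne m 0 with rfl | hm0
      · simp [Real.zero_rpow (show -s ≠ 0 by linarith), Real.zero_rpow (show -(2:ℝ) ≠ 0 by norm_num)]
      · -- m ≥ nthPrime n
        have hge : nthPrime n ≤ m := by
          rcases Nat.mem_smoothNumbers.not.mp hm with h
          push_neg at h
          rcases h hm0 with ⟨q, hq, hq'⟩
          exact le_trans hq' (Nat.le_of_dvd (Nat.pos_of_ne_zero hm0) (Nat.dvd_of_mem_primeFactorsList hq))
        have hm0' : (0:ℝ) < (m:ℝ) := by positivity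
        have h1 : (m:ℝ) ^ (-s) = (m:ℝ) ^ (2 - s) * (m:ℝ) ^ (-(2:ℝ)) := by
          rw [← Real.rpow_add hm0']; ring_nf
        rw [h1]
        have h2 : (m:ℝ) ^ (2 - s) ≤ ((nthPrime n : ℝ)) ^ (2 - s) :=
          Real.rpow_le_rpow_of_nonpos hp0 (by exact_mod_cast hge) (by linarith)
        exact mul_le_mul_of_nonneg_right h2 (by positivity)
    · rw [Set.indicator_of_notMem hm]
      positivity
  have := Summable.tsum_le_tsum hle (((fmh_summable hs1).indicator _)) hsum2
  refine this.trans ?_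
  rw [tsum_mul_left]
  have hz2 : realZeta 2 = ∑' m : ℕ, (m : ℝ) ^ (-(2:ℝ)) := by
    have := realZeta_eq (s := 2) one_lt_two
    simpa [fmh_apply] using this
  rw [hz2]; ring_nf; rfl

theorem stmt1 (n : ℕ) :
    Tendsto (fun s : ℝ => (1 - Qpartial n s / realZeta s) ^ (-1 / s)) atTop
      (𝓝 (nthPrime n : ℝ)) := by
  have hp : (nthPrime n).Prime := Nat.prime_nth_prime n
  set p : ℝ := (nthPrime n : ℝ) with hpdef
  have hp0 : (0:ℝ) < p := by rw [hpdef]; exact_mod_cast hp.pos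
  have hp1 : (1:ℝ) < p := by rw [hpdef]; exact_mod_cast hp.one_lt
  set K : ℝ := realZeta 2 with hKdef
  have hK1 : (1:ℝ) ≤ K := realZeta_ge_one one_lt_two
  have hK0 : (0:ℝ) < K := lt_of_lt_of_le one_pos hK1
  set A : ℝ → ℝ := fun s => 1 - Qpartial n s / realZeta s with hAdef
  have key : ∀ s : ℝ, 2 ≤ s →
      p ^ (-s) / K ≤ A s ∧ A s ≤ (K * p ^ (2:ℝ)) * p ^ (-s) := by
    intro s hs
    have hs1 : (1:ℝ) < s := by linarith
    have hz1 : 1 ≤ realZeta s := realZeta_ge_one hs1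
    have hz0 : 0 < realZeta s := lt_of_lt_of_le one_pos hz1
    have hzK : realZeta s ≤ K := realZeta_le hs
    set B := ∑' m : ↥(Nat.smoothNumbers (nthPrime n))ᶜ, fmh s m with hB
    have hsplit : realZeta s = Qpartial n s + B := zeta_split n hs1
    have hζ : realZeta s ≠ 0 := ne_of_gt hz0
    have hQ : Qpartial n s = realZeta s - B := by linarith
    have hA : A s = B / realZeta s := by
      show 1 - Qpartial n s / realZeta s = B / realZeta s
      rw [hQ, sub_div, div_self hζ]
      ring
    have hBl : p ^ (-s) ≤ B := B_lower n hs1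
    have hBu : B ≤ K * p ^ (2 - s) := B_upper n hs
    have hB0 : 0 ≤ B := le_trans (by positivity) hBl
    constructor
    · rw [hA]
      gcongr
    · rw [hA]
      have h1 : B / realZeta s ≤ B := div_le_self hB0 hz1
      refine h1.trans (hBu.trans (le_of_eq ?_))
      rw [mul_assoc, ← Real.rpow_add hp0, ← sub_eq_add_neg]
  have hApos : ∀ s : ℝ, 2 ≤ s → 0 < A s := by
    intro s hs
    refine lt_of_lt_of_le ?_ (key s hs).1
    positivity
  -- the logarithmic limit
  have hlog : Tendsto (fun s : ℝ => (-1/s) * Real.log (A s)) atTop (𝓝 (Real.log p)) := by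
    have hc : ∀ c : ℝ, Tendsto (fun s : ℝ => c / s) atTop (𝓝 0) := by
      intro c
      simpa [div_eq_mul_inv] using tendsto_inv_atTop_zero.const_mul c
    have hLo : Tendsto (fun s : ℝ => Real.log p - (Real.log K + 2 * Real.log p) / s)
        atTop (𝓝 (Real.log p)) := by
      simpa using tendsto_const_nhds.sub (hc (Real.log K + 2 * Real.log p))
    have hHi : Tendsto (fun s : ℝ => Real.log p + Real.log K / s)
        atTop (𝓝 (Real.log p)) := by
      simpa using tendsto_const_nhds.add (hc (Real.log K))
    refine tendsto_of_tendsto_of_tendsto_of_le_of_le' hLo hHi ?_ ?_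
    · filter_upwards [eventually_ge_atTop (2:ℝ)] with s hs
      have hs0 : (0:ℝ) < s := by linarith
      have hup : A s ≤ (K * p ^ (2:ℝ)) * p ^ (-s) := (key s hs).2
      have hlogup : Real.log (A s) ≤ Real.log K + 2 * Real.log p + (-s) * Real.log p := by
        have h1 := Real.log_le_log (hApos s hs) hup
        rwa [Real.log_mul (by positivity) (by positivity),
          Real.log_mul (by positivity) (by positivity),
          Real.log_rpow hp0, Real.log_rpow hp0] at h1
      have h2 : (s * Real.log p - (Real.log K + 2 * Real.log p)) / s
          ≤ (-Real.log (A s)) / s :=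
        div_le_div_of_nonneg_right (by linarith) hs0.le
      calc Real.log p - (Real.log K + 2 * Real.log p) / s
          = (s * Real.log p - (Real.log K + 2 * Real.log p)) / s := by
            rw [sub_div, mul_div_cancel_left₀ _ (ne_of_gt hs0)]
        _ ≤ (-Real.log (A s)) / s := h2
        _ = (-1/s) * Real.log (A s) := by ring
    · filter_upwards [eventually_ge_atTop (2:ℝ)] with s hs
      have hs0 : (0:ℝ) < s := by linarith
      have hlo : p ^ (-s) / K ≤ A s := (key s hs).1
      have hloglo : (-s) * Real.log p - Real.log K ≤ Real.log (A s) := by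
        have h1 := Real.log_le_log (by positivity) hlo
        rwa [Real.log_div (by positivity) (by positivity), Real.log_rpow hp0] at h1
      have h2 : (-Real.log (A s)) / s ≤ (s * Real.log p + Real.log K) / s :=
        div_le_div_of_nonneg_right (by linarith) hs0.le
      calc (-1/s) * Real.log (A s) = (-Real.log (A s)) / s := by ring
        _ ≤ (s * Real.log p + Real.log K) / s := h2
        _ = Real.log p + Real.log K / s := by
            rw [add_div, mul_div_cancel_left₀ _ (ne_of_gt hs0)]
  have hexp : Tendsto (fun s : ℝ => Real.exp ((-1/s) * Real.log (A s))) atTop (𝓝 p) := by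
    have h := (Real.continuous_exp.tendsto _).comp hlog
    rwa [Real.exp_log hp0] at h
  refine hexp.congr' ?_
  filter_upwards [eventually_ge_atTop (2:ℝ)] with s hs
  rw [Real.rpow_def_of_pos (hApos s hs), mul_comm]
end

section
/- Let p_1 < p_2 < ... be the primes and define P(s) = Σ_{p prime} p^{-s} and the partial prime zeta function P_n(s) = Σ_{k=1}^{n} p_k^{-s}. Then for every n ≥ 0, the limit as real s → ∞ of (P(s) - P_n(s))^{-1/s} equals p_{n+1}. -/
open Filter Topology

noncomputable def primeZeta (s : ℝ) : ℝ := ∑' p : Nat.Primes, ((p : ℕ) : ℝ) ^ (-s)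

/-- Partial prime zeta function `P_n(s) = Σ_{k=1}^n p_k^{-s}` (with `P_0 = 0`). -/
noncomputable def primeZetaPartial (n : ℕ) (s : ℝ) : ℝ :=
  ∑ k ∈ Finset.range n, ((nthPrime k : ℝ)) ^ (-s)

lemma nthPrime_prime (k : ℕ) : (nthPrime k).Prime :=
  Nat.nth_mem_of_infinite Nat.infinite_setOf_prime k

lemma nthPrime_strictMono : StrictMono nthPrime :=
  Nat.nth_strictMono Nat.infinite_setOf_prime

noncomputable def primesEquiv : ℕ ≃ Nat.Primes where
  toFun k := ⟨nthPrime k, nthPrime_prime k⟩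
  invFun p := Nat.count Nat.Prime p
  left_inv k := Nat.count_nth_of_infinite Nat.infinite_setOf_prime k
  right_inv p := Subtype.ext (Nat.nth_count p.2)

lemma primeZeta_eq (s : ℝ) : primeZeta s = ∑' k : ℕ, ((nthPrime k : ℝ)) ^ (-s) :=
  (primesEquiv.tsum_eq fun p : Nat.Primes => ((p : ℕ) : ℝ) ^ (-s)).symm

lemma summable_nthPrime (s : ℝ) (hs : 1 < s) :
    Summable (fun k : ℕ => ((nthPrime k : ℝ)) ^ (-s)) := by
  have h : Summable (fun p : Nat.Primes => ((p : ℕ) : ℝ) ^ (-s)) :=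
    Nat.Primes.summable_rpow.mpr (by linarith)
  exact primesEquiv.summable_iff.mpr h

lemma nthPrime_add_ge (n k : ℕ) : nthPrime n + k ≤ nthPrime (n + k) := by
  induction k with
  | zero => simp
  | succ k ih =>
    have h2 := nthPrime_strictMono (Nat.lt_succ_self (n + k))
    rw [Nat.succ_eq_add_one] at h2
    have h3 : n + (k + 1) = (n + k) + 1 := by omega
    rw [h3]
    omega

theorem stmt4 (n : ℕ) :
    Tendsto (fun s : ℝ => (primeZeta s - primeZetaPartial n s) ^ (-1 / s)) atTop
      (𝓝 (nthPrime n : ℝ)) := by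
  set q : ℕ := nthPrime n with hq
  have hq2 : 2 ≤ q := (nthPrime_prime n).two_le
  have hq0 : (0 : ℝ) < q := by positivity
  -- constant C
  have hsum2 : Summable (fun k : ℕ => ((q + k : ℕ) : ℝ) ^ (-2 : ℝ)) := by
    have : Summable (fun k : ℕ => ((k : ℝ)) ^ (-2 : ℝ)) :=
      Real.summable_nat_rpow.mpr (by norm_num)
    have := (summable_nat_add_iff q).mpr this
    refine this.congr fun k => ?_
    push_cast; ring_nf
  set C : ℝ := (q : ℝ) ^ (2 : ℝ) * ∑' k : ℕ, ((q + k : ℕ) : ℝ) ^ (-2 : ℝ) with hC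
  have hC1 : 1 ≤ C := by
    have h0 : ((q + 0 : ℕ) : ℝ) ^ (-2 : ℝ) ≤ ∑' k : ℕ, ((q + k : ℕ) : ℝ) ^ (-2 : ℝ) :=
      Summable.le_tsum hsum2 0 fun k _ => by positivity
    have : (q : ℝ) ^ (2 : ℝ) * ((q + 0 : ℕ) : ℝ) ^ (-2 : ℝ) = 1 := by
      rw [Nat.add_zero, ← Real.rpow_add hq0]
      norm_num
    calc (1 : ℝ) = (q : ℝ) ^ (2 : ℝ) * ((q + 0 : ℕ) : ℝ) ^ (-2 : ℝ) := this.symm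
      _ ≤ C := by
        rw [hC]
        exact mul_le_mul_of_nonneg_left h0 (by positivity)
  have hC0 : (0 : ℝ) < C := lt_of_lt_of_le one_pos hC1
  -- tail bounds for s ≥ 2
  have key : ∀ s : ℝ, 2 ≤ s →
      (q : ℝ) ^ (-s) ≤ primeZeta s - primeZetaPartial n s ∧
      primeZeta s - primeZetaPartial n s ≤ C * (q : ℝ) ^ (-s) := by
    intro s hs
    have hs1 : (1 : ℝ) < s := by linarith
    have hsml := summable_nthPrime s hs1
    have htail : primeZeta s - primeZetaPartial n s
        = ∑' k : ℕ, ((nthPrime (k + n) : ℝ)) ^ (-s) := by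
      rw [primeZeta_eq, primeZetaPartial]
      exact sub_eq_iff_eq_add'.mpr (hsml.sum_add_tsum_nat_add n).symm
    have htails : Summable (fun k : ℕ => ((nthPrime (k + n) : ℝ)) ^ (-s)) :=
      (summable_nat_add_iff n).mpr hsml
    constructor
    · rw [htail]
      have := Summable.le_tsum htails 0 fun k _ => by positivity
      simpa using this
    · rw [htail]
      have hCq : C * (q : ℝ) ^ (-s)
          = ∑' k : ℕ, ((q + k : ℕ) : ℝ) ^ (-2 : ℝ) * (q : ℝ) ^ (2 - s) := by
        rw [tsum_mul_right, hC]
        rw [show (2 : ℝ) - s = 2 + (-s) by ring, Real.rpow_add hq0]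
        ring
      rw [hCq]
      refine Summable.tsum_le_tsum (fun k => ?_) htails (hsum2.mul_right _)
      have h1 : ((nthPrime (k + n) : ℝ)) ^ (-s) ≤ ((q + k : ℕ) : ℝ) ^ (-s) := by
        have hle : (q + k : ℕ) ≤ nthPrime (k + n) := by
          have := nthPrime_add_ge n k
          rw [Nat.add_comm k n]; exact this
        refine Real.rpow_le_rpow_of_nonpos (by positivity) ?_ (by linarith)
        exact_mod_cast hle
      have h2 : ((q + k : ℕ) : ℝ) ^ (-s)
          = ((q + k : ℕ) : ℝ) ^ (-2 : ℝ) * ((q + k : ℕ) : ℝ) ^ (2 - s) := by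
        rw [← Real.rpow_add (by positivity)]
        ring_nf
      have h3 : ((q + k : ℕ) : ℝ) ^ (2 - s) ≤ (q : ℝ) ^ (2 - s) := by
        refine Real.rpow_le_rpow_of_nonpos hq0 ?_ (by linarith)
        exact_mod_cast Nat.le_add_right q k
      calc ((nthPrime (k + n) : ℝ)) ^ (-s) ≤ ((q + k : ℕ) : ℝ) ^ (-s) := h1
        _ = ((q + k : ℕ) : ℝ) ^ (-2 : ℝ) * ((q + k : ℕ) : ℝ) ^ (2 - s) := h2
        _ ≤ ((q + k : ℕ) : ℝ) ^ (-2 : ℝ) * (q : ℝ) ^ (2 - s) := by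
            refine mul_le_mul_of_nonneg_left h3 (by positivity)
  -- now the limit
  have hlow : Tendsto (fun s : ℝ => C ^ (-1 / s) * (q : ℝ)) atTop (𝓝 (q : ℝ)) := by
    have h1 : Tendsto (fun s : ℝ => -1 / s) atTop (𝓝 0) := by
      have := tendsto_inv_atTop_zero (𝕜 := ℝ)
      have h2 := this.neg
      simpa [neg_div, one_div] using h2
    have h3 : Tendsto (fun s : ℝ => C ^ (-1 / s)) atTop (𝓝 1) := by
      have hc : ContinuousAt (fun x : ℝ => C ^ x) 0 := Real.continuousAt_const_rpow hC0.ne'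
      have := hc.tendsto.comp h1
      simpa [Function.comp_def] using this
    have := h3.mul tendsto_const_nhds (f := fun s : ℝ => C ^ (-1/s)) (g := fun _ : ℝ => (q:ℝ))
    simpa using this
  refine tendsto_of_tendsto_of_tendsto_of_le_of_le' hlow tendsto_const_nhds ?_ ?_
  · filter_upwards [eventually_ge_atTop (2 : ℝ)] with s hs
    have hs0 : (0 : ℝ) < s := by linarith
    obtain ⟨hl, hu⟩ := key s hs
    have hLpos : 0 < primeZeta s - primeZetaPartial n s :=
      lt_of_lt_of_le (by positivity) hl
    have := Real.rpow_le_rpow_of_nonpos hLpos hu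
      (show -1/s ≤ 0 from div_nonpos_iff.mpr (Or.inr ⟨by norm_num, hs0.le⟩))
    calc C ^ (-1 / s) * (q : ℝ)
        = (C * (q : ℝ) ^ (-s)) ^ (-1 / s) := by
          rw [Real.mul_rpow hC0.le (by positivity), ← Real.rpow_mul hq0.le,
            show (-s) * (-1/s) = 1 by field_simp, Real.rpow_one]
      _ ≤ (primeZeta s - primeZetaPartial n s) ^ (-1 / s) := this
  · filter_upwards [eventually_ge_atTop (2 : ℝ)] with s hs
    have hs0 : (0 : ℝ) < s := by linarith
    obtain ⟨hl, hu⟩ := key s hs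
    have := Real.rpow_le_rpow_of_nonpos (by positivity) hl
      (show -1/s ≤ 0 from div_nonpos_iff.mpr (Or.inr ⟨by norm_num, hs0.le⟩))
    calc (primeZeta s - primeZetaPartial n s) ^ (-1 / s)
        ≤ ((q : ℝ) ^ (-s)) ^ (-1 / s) := this
      _ = (q : ℝ) := by
          rw [← Real.rpow_mul hq0.le]
          rw [show (-s) * (-1/s) = 1 by field_simp]
          exact Real.rpow_one _
end

section
/- For real s > 1, the squared complex modulus of ζ(σ + it) with σ = s and t real satisfies |ζ(σ+it)|² = (ζ(4σ)/ζ(2σ)) · ∏_{p prime} (1 - cos(t·log p)/cosh(σ·log p))^{-1}. -/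
open Complex

lemma realZeta_summable {r : ℝ} (hr : 1 < r) :
    Summable (fun n : ℕ => ((n : ℝ) + 1) ^ (-r)) := by
  have := Real.summable_nat_rpow.mpr (by linarith : -r < -1)
  exact_mod_cast (summable_nat_add_iff 1).mpr this

lemma realZeta_pos {r : ℝ} (hr : 1 < r) : 0 < realZeta r := by
  have h := realZeta_summable hr
  refine h.tsum_pos (fun n => by positivity) 0 (by positivity)

lemma ofReal_realZeta {r : ℝ} (hr : 1 < r) : ((realZeta r : ℝ) : ℂ) = riemannZeta r := by
  rw [zeta_eq_tsum_one_div_nat_add_one_cpow (by simpa using hr), realZeta, ofReal_tsum]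
  congr 1
  ext n
  rw [one_div, ← Complex.cpow_neg]
  rw [show ((n:ℂ)+1) = (((n:ℝ)+1 : ℝ) : ℂ) by push_cast; ring]
  rw [show (-(r:ℂ)) = ((-r : ℝ) : ℂ) by push_cast; ring]
  rw [← ofReal_cpow (by positivity)]

lemma alg (v c : ℝ) (hv : 1 < v) (hc : |c| ≤ 1) :
    (1 - 2*v⁻¹*c + v⁻¹^2)⁻¹ * (1 - v⁻¹^2)⁻¹
      = (1 - v⁻¹^4)⁻¹ * (1 - c/((v + v⁻¹)/2))⁻¹ := by
  have hv0 : v ≠ 0 := by positivity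
  rw [← mul_inv, ← mul_inv]
  congr 1
  have hvv : v + v⁻¹ ≠ 0 := by positivity
  field_simp
  ring

lemma abs_log_one_sub_le {x : ℝ} (hx : |x| ≤ 4/5) : |Real.log (1-x)| ≤ 5 * |x| := by
  obtain ⟨hx1, hx2⟩ := abs_le.mp hx
  have pos : (0:ℝ) < 1 - x := by linarith
  have h15 : (1:ℝ)/5 ≤ 1 - x := by linarith
  have h1 : Real.log (1-x) ≤ -x := by
    have := Real.log_le_sub_one_of_pos pos; linarith
  have h2 : -Real.log (1-x) ≤ x * (1-x)⁻¹ := by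
    have := Real.log_le_sub_one_of_pos (inv_pos.mpr pos)
    rw [Real.log_inv] at this
    have heq : (1-x)⁻¹ - 1 = x * (1-x)⁻¹ := by field_simp; ring
    linarith
  have hinv5 : (1-x)⁻¹ ≤ 5 := by
    have := one_div_le_one_div_of_le (by norm_num : (0:ℝ) < 1/5) h15
    simpa using this
  rcases le_or_gt 0 x with h0 | h0
  · rw [_root_.abs_of_nonneg h0]
    rw [abs_le]
    constructor
    · have : x * (1-x)⁻¹ ≤ x * 5 := mul_le_mul_of_nonneg_left hinv5 h0
      linarith
    · linarith
  · rw [_root_.abs_of_neg h0, _root_.abs_of_nonneg (Real.log_nonneg (by linarith))]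
    linarith

lemma prime_two_le (p : Nat.Primes) : (2:ℝ) ≤ ((p:ℕ):ℝ) := by
  exact_mod_cast p.2.two_le

lemma rpow_lt_one' (p : Nat.Primes) {r : ℝ} (hr : 0 < r) : ((p:ℕ):ℝ) ^ (-r) < 1 := by
  have h2 := prime_two_le p
  have : (1:ℝ) < ((p:ℕ):ℝ) := by linarith
  exact Real.rpow_lt_one_of_one_lt_of_neg this (by linarith)

lemma cpow_real (p : Nat.Primes) (r : ℝ) :
    ((p:ℕ):ℂ) ^ (-(r:ℂ)) = ((((p:ℕ):ℝ) ^ (-r) : ℝ) : ℂ) := by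
  rw [show (-(r:ℂ)) = ((-r : ℝ) : ℂ) by push_cast; ring,
    show ((p:ℕ):ℂ) = ((((p:ℕ):ℝ)):ℂ) by push_cast; rfl,
    ← ofReal_cpow (by positivity)]

lemma norm_euler_real {r : ℝ} (hr : 1 < r) :
    HasProd (fun p : Nat.Primes => (1 - ((p:ℕ):ℝ) ^ (-r))⁻¹) (realZeta r) := by
  have h := (riemannZeta_eulerProduct_hasProd (s := (r:ℂ)) (by simpa using hr)).norm
  have hval : ‖riemannZeta (r:ℂ)‖ = realZeta r := by
    rw [← ofReal_realZeta hr, Complex.norm_real, Real.norm_eq_abs,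
      _root_.abs_of_nonneg (realZeta_pos hr).le]
  rw [hval] at h
  refine h.congr_fun fun p => ?_
  rw [show ((p:Nat.Primes):ℂ) = ((p:ℕ):ℂ) from rfl, cpow_real p r,
    show (1:ℂ) - ((((p:ℕ):ℝ) ^ (-r) : ℝ) : ℂ) = (((1 - ((p:ℕ):ℝ) ^ (-r) : ℝ)) : ℂ) by push_cast; ring,
    norm_inv, Complex.norm_real, Real.norm_eq_abs,
    _root_.abs_of_nonneg (by linarith [rpow_lt_one' p (by linarith : (0:ℝ) < r)])]

lemma norm_term_sq (σ t : ℝ) (p : Nat.Primes) :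
    ‖(1 - ((p:ℕ):ℂ) ^ (-((σ:ℂ) + (t:ℂ)*I)))⁻¹‖ * ‖(1 - ((p:ℕ):ℂ) ^ (-((σ:ℂ) + (t:ℂ)*I)))⁻¹‖
      = (1 - 2 * Real.exp (-(σ * Real.log (p:ℕ))) * Real.cos (t * Real.log (p:ℕ))
          + Real.exp (-(σ * Real.log (p:ℕ))) ^ 2)⁻¹ := by
  set L : ℝ := Real.log (p:ℕ) with hLdef
  have hp0 : ((p:ℕ):ℂ) ≠ 0 := by
    exact_mod_cast Nat.cast_ne_zero.mpr p.2.pos.ne'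
  have hz : ((p:ℕ):ℂ) ^ (-((σ:ℂ) + (t:ℂ)*I))
      = Complex.exp (((-(σ*L) : ℝ) : ℂ) + ((-(t*L) : ℝ) : ℂ) * I) := by
    rw [Complex.cpow_def_of_ne_zero hp0,
      show Complex.log ((p:ℕ):ℂ) = ((L:ℝ):ℂ) from (Complex.natCast_log).symm]
    congr 1
    push_cast
    ring
  rw [hz]
  set w : ℂ := ((-(σ*L) : ℝ) : ℂ) + ((-(t*L) : ℝ) : ℂ) * I with hw
  have hre : w.re = -(σ*L) := by simp [hw]
  have him : w.im = -(t*L) := by simp [hw]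
  have h1 : (Complex.exp w).re = Real.exp (-(σ*L)) * Real.cos (-(t*L)) := by
    rw [Complex.exp_re, hre, him]
  have h2 : (Complex.exp w).im = Real.exp (-(σ*L)) * Real.sin (-(t*L)) := by
    rw [Complex.exp_im, hre, him]
  rw [norm_inv, ← mul_inv]
  congr 1
  rw [← sq, Complex.sq_norm,
    Complex.normSq_apply, Complex.sub_re, Complex.sub_im, Complex.one_re, Complex.one_im,
    h1, h2, Real.cos_neg, Real.sin_neg]
  have := Real.sin_sq_add_cos_sq (t*L)
  nlinarith [this]

lemma hL0 (p : Nat.Primes) : 0 < Real.log (p:ℕ) :=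
  Real.log_pos (by exact_mod_cast p.2.one_lt)

lemma hch54 (σ : ℝ) (hσ : 1 < σ) (p : Nat.Primes) : 5/4 ≤ Real.cosh (σ * Real.log (p:ℕ)) := by
  have h2 : (2:ℝ) ≤ ((p:ℕ):ℝ) := by exact_mod_cast p.2.two_le
  have hlog2 : Real.log 2 ≤ Real.log (p:ℕ) := Real.log_le_log (by norm_num) h2
  have hl2 : (0:ℝ) < Real.log 2 := Real.log_pos (by norm_num)
  have hmono : Real.cosh (Real.log 2) ≤ Real.cosh (σ * Real.log (p:ℕ)) := by
    rw [Real.cosh_le_cosh]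
    rw [_root_.abs_of_nonneg hl2.le, _root_.abs_of_nonneg (by nlinarith [hL0 p] : 0 ≤ σ * Real.log (p:ℕ))]
    nlinarith [hL0 p]
  have : Real.cosh (Real.log 2) = 5/4 := by
    rw [Real.cosh_eq, Real.exp_log (by norm_num : (0:ℝ) < 2), Real.exp_neg,
      Real.exp_log (by norm_num : (0:ℝ) < 2)]
    norm_num
  linarith

lemma habs45 (σ t : ℝ) (hσ : 1 < σ) (p : Nat.Primes) : |Real.cos (t * Real.log (p:ℕ)) / Real.cosh (σ * Real.log (p:ℕ))| ≤ 4/5 := by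
  have h54 := hch54 σ hσ p
  rw [abs_div, _root_.abs_of_nonneg (by linarith : (0:ℝ) ≤ Real.cosh (σ * Real.log (p:ℕ)))]
  rw [div_le_iff₀ (by linarith)]
  have := Real.abs_cos_le_one (t * Real.log (p:ℕ))
  nlinarith

lemma habs2 (σ t : ℝ) (p : Nat.Primes) : |Real.cos (t * Real.log (p:ℕ)) / Real.cosh (σ * Real.log (p:ℕ))|
    ≤ 2 * ((p:ℕ):ℝ) ^ (-σ) := by
  set L := Real.log (p:ℕ)
  have hchpos : (0:ℝ) < Real.cosh (σ * L) := Real.cosh_pos _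
  have hrw : ((p:ℕ):ℝ) ^ (-σ) = Real.exp (-(σ * L)) := by
    rw [Real.rpow_def_of_pos (by exact_mod_cast p.2.pos)]
    congr 1; ring
  have hch2 : Real.exp (σ*L) / 2 ≤ Real.cosh (σ*L) := by
    rw [Real.cosh_eq]; linarith [Real.exp_pos (-(σ*L))]
  rw [abs_div, _root_.abs_of_nonneg hchpos.le, div_le_iff₀ hchpos, hrw]
  have h1 : |Real.cos (t*L)| ≤ 1 := Real.abs_cos_le_one _
  have h2 : (1:ℝ) ≤ 2 * Real.exp (-(σ*L)) * (Real.exp (σ*L) / 2) := by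
    rw [show 2 * Real.exp (-(σ*L)) * (Real.exp (σ*L)/2) = Real.exp (-(σ*L)) * Real.exp (σ*L) by ring,
      ← Real.exp_add]
    simp
  nlinarith [Real.exp_pos (-(σ*L))]

lemma multB (σ t : ℝ) (hσ : 1 < σ) :
    Multipliable (fun p : Nat.Primes =>
      (1 - Real.cos (t * Real.log (p:ℕ)) / Real.cosh (σ * Real.log (p:ℕ)))⁻¹) := by
  have hpos : ∀ p : Nat.Primes,
      (0:ℝ) < (1 - Real.cos (t * Real.log (p:ℕ)) / Real.cosh (σ * Real.log (p:ℕ)))⁻¹ := by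
    intro p
    have := habs45 σ t hσ p
    have := abs_le.mp this
    have h : (0:ℝ) < 1 - Real.cos (t * Real.log (p:ℕ)) / Real.cosh (σ * Real.log (p:ℕ)) := by
      linarith [this.2]
    positivity
  have hsum : Summable (fun p : Nat.Primes =>
      Real.log ((1 - Real.cos (t * Real.log (p:ℕ)) / Real.cosh (σ * Real.log (p:ℕ)))⁻¹)) := by
    have hg : Summable (fun p : Nat.Primes => 10 * ((p:ℕ):ℝ) ^ (-σ)) :=
      (Nat.Primes.summable_rpow.mpr (by linarith)).mul_left 10
    refine Summable.of_norm_bounded hg fun p => ?_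
    rw [Real.norm_eq_abs, Real.log_inv, abs_neg]
    set x := Real.cos (t * Real.log (p:ℕ)) / Real.cosh (σ * Real.log (p:ℕ))
    have h45 := habs45 σ t hσ p
    have h2 := habs2 σ t p
    calc |Real.log (1 - x)| ≤ 5 * |x| := abs_log_one_sub_le h45
      _ ≤ 5 * (2 * ((p:ℕ):ℝ) ^ (-σ)) := by linarith
      _ = 10 * ((p:ℕ):ℝ) ^ (-σ) := by ring
  exact Real.multipliable_of_summable_log hpos hsum
lemma pointwise (σ t : ℝ) (hσ : 1 < σ) (p : Nat.Primes) :
    ‖(1 - ((p:ℕ):ℂ) ^ (-((σ:ℂ) + (t:ℂ)*I)))⁻¹‖ * ‖(1 - ((p:ℕ):ℂ) ^ (-((σ:ℂ) + (t:ℂ)*I)))⁻¹‖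
        * (1 - ((p:ℕ):ℝ) ^ (-(2*σ)))⁻¹
      = (1 - ((p:ℕ):ℝ) ^ (-(4*σ)))⁻¹
        * (1 - Real.cos (t * Real.log (p:ℕ)) / Real.cosh (σ * Real.log (p:ℕ)))⁻¹ := by
  set L : ℝ := Real.log (p:ℕ) with hLdef
  have hp0 : (0:ℝ) < ((p:ℕ):ℝ) := by exact_mod_cast p.2.pos
  have hp1 : (1:ℝ) < ((p:ℕ):ℝ) := by exact_mod_cast p.2.one_lt
  set v : ℝ := ((p:ℕ):ℝ) ^ σ with hvdef
  have hv1 : 1 < v := Real.one_lt_rpow_iff_of_pos hp0 |>.mpr (Or.inl ⟨hp1, by linarith⟩)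
  have hvexp : v = Real.exp (σ * L) := by
    rw [hvdef, Real.rpow_def_of_pos hp0]; congr 1; ring
  have heu : Real.exp (-(σ * L)) = v⁻¹ := by
    rw [hvexp, ← Real.exp_neg]
  have e2 : ((p:ℕ):ℝ) ^ (-(2*σ)) = v⁻¹ ^ 2 := by
    rw [Real.rpow_neg hp0.le, show 2*σ = σ * ((2:ℕ):ℝ) by push_cast; ring,
      Real.rpow_mul hp0.le, Real.rpow_natCast, inv_pow]
  have e4 : ((p:ℕ):ℝ) ^ (-(4*σ)) = v⁻¹ ^ 4 := by
    rw [Real.rpow_neg hp0.le, show 4*σ = σ * ((4:ℕ):ℝ) by push_cast; ring,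
      Real.rpow_mul hp0.le, Real.rpow_natCast, inv_pow]
  have ech : Real.cosh (σ * L) = (v + v⁻¹)/2 := by
    rw [Real.cosh_eq, hvexp, ← Real.exp_neg]
  rw [norm_term_sq σ t p, e2, e4, ech, heu]
  exact alg v (Real.cos (t*L)) hv1 (Real.abs_cos_le_one _)

theorem stmt7 (σ t : ℝ) (hσ : 1 < σ) :
    ‖riemannZeta ((σ : ℂ) + (t : ℂ) * Complex.I)‖ ^ 2 =
      (realZeta (4 * σ) / realZeta (2 * σ)) *
        ∏' p : Nat.Primes,
          (1 - Real.cos (t * Real.log (p : ℕ)) / Real.cosh (σ * Real.log (p : ℕ)))⁻¹ := by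
  have hs1 : 1 < ((σ:ℂ) + (t:ℂ) * I).re := by simp [hσ]
  have hzet := (riemannZeta_eulerProduct_hasProd hs1).norm
  have hsq := hzet.mul hzet
  have hz2 := norm_euler_real (r := 2*σ) (by linarith)
  have hz4 := norm_euler_real (r := 4*σ) (by linarith)
  have hB := multB σ t hσ
  have hLprod := hsq.mul hz2
  have hRprod := hz4.mul hB.hasProd
  have hEq : ‖riemannZeta ((σ:ℂ) + (t:ℂ) * I)‖ * ‖riemannZeta ((σ:ℂ) + (t:ℂ) * I)‖
        * realZeta (2*σ)
      = realZeta (4*σ) * ∏' p : Nat.Primes,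
          (1 - Real.cos (t * Real.log (p:ℕ)) / Real.cosh (σ * Real.log (p:ℕ)))⁻¹ := by
    refine HasProd.unique hLprod (hRprod.congr_fun fun p => ?_)
    exact pointwise σ t hσ p
  have hZ2 := realZeta_pos (r := 2*σ) (by linarith)
  rw [sq, div_mul_eq_mul_div, eq_div_iff hZ2.ne']
  linarith [hEq]
end

section
/- In particular, ζ(2) = (π²/√105) · ∏_{p prime} (1 - 2/(p² + p^{-2}))^{-1/2}. -/
open Real Finset

namespace Stmt10Aux

lemma bernoulli'_five : bernoulli' 5 = 0 := by
  rw [bernoulli'_def]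
  norm_num [sum_range_succ, Nat.choose]

lemma bernoulli'_six : bernoulli' 6 = 1 / 42 := by
  rw [bernoulli'_def]
  norm_num [sum_range_succ, Nat.choose, bernoulli'_five]

lemma bernoulli'_seven : bernoulli' 7 = 0 := by
  rw [bernoulli'_def]
  norm_num [sum_range_succ, Nat.choose, bernoulli'_five, bernoulli'_six]

lemma bernoulli'_eight : bernoulli' 8 = -1 / 30 := by
  rw [bernoulli'_def]
  norm_num [sum_range_succ, Nat.choose, bernoulli'_five, bernoulli'_six, bernoulli'_seven]

lemma bernoulli_four : bernoulli 4 = -1 / 30 := by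
  rw [bernoulli_eq_bernoulli'_of_ne_one (by norm_num)]; exact bernoulli'_four

lemma bernoulli_eight : bernoulli 8 = -1 / 30 := by
  rw [bernoulli_eq_bernoulli'_of_ne_one (by norm_num)]; exact bernoulli'_eight

/-- inversion of a `HasProd` in `ℝ` when the limit is nonzero. -/
lemma hasProd_inv₀ {ι : Type*} {f : ι → ℝ} {a : ℝ} (h : HasProd f a) (ha : a ≠ 0) :
    HasProd (fun i => (f i)⁻¹) a⁻¹ := by
  have := Filter.Tendsto.inv₀ h ha
  simpa only [HasProd, ← Finset.prod_inv_distrib] using this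

/-- The completely multiplicative function `n ↦ (n : ℝ) ^ (-s)`. -/
noncomputable def zetaHom (s : ℝ) (hs : 0 < s) : ℕ →*₀ ℝ where
  toFun n := (n : ℝ) ^ (-s)
  map_zero' := by
    simp [Real.zero_rpow (neg_ne_zero.mpr hs.ne')]
  map_one' := by simp
  map_mul' m n := by
    push_cast
    exact Real.mul_rpow (Nat.cast_nonneg m) (Nat.cast_nonneg n)

lemma realZeta_eq (s : ℝ) (hs : 1 < s) : realZeta s = ∑' n : ℕ, (n : ℝ) ^ (-s) := by
  have hsum : Summable (fun n : ℕ => (n : ℝ) ^ (-s)) :=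
    Real.summable_nat_rpow.mpr (by linarith)
  rw [realZeta, Summable.tsum_eq_zero_add hsum]
  have h0 : ((0 : ℕ) : ℝ) ^ (-s) = 0 := by
    simp [Real.zero_rpow (by intro h; nlinarith [neg_eq_zero.mp h] : (-s) ≠ 0)]
  rw [h0, zero_add]
  congr 1
  ext n
  push_cast
  ring_nf

lemma hasProd_euler (s : ℝ) (hs : 1 < s) :
    HasProd (fun p : Nat.Primes => (1 - ((p : ℕ) : ℝ) ^ (-s))⁻¹) (realZeta s) := by
  have h0 : (0 : ℝ) < s := by linarith
  have hsum : Summable (fun n : ℕ => ‖zetaHom s h0 n‖) := by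
    have : ∀ n : ℕ, ‖zetaHom s h0 n‖ = (n : ℝ) ^ (-s) := fun n => by
      simp [zetaHom, Real.norm_eq_abs, abs_of_nonneg (Real.rpow_nonneg (Nat.cast_nonneg n) _)]
    simpa only [this] using Real.summable_nat_rpow.mpr (by linarith : -s < -1)
  have H := EulerProduct.eulerProduct_completely_multiplicative_hasProd (f := zetaHom s h0) hsum
  rw [realZeta_eq s hs]
  exact H

lemma realZeta_val (k : ℕ) (hk : k ≠ 0) :
    realZeta ((2 * k : ℕ) : ℝ) =
      (-1 : ℝ) ^ (k + 1) * (2 : ℝ) ^ (2 * k - 1) * π ^ (2 * k) *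
        bernoulli (2 * k) / (Nat.factorial (2 * k)) := by
  have hk1 : 1 ≤ k := Nat.one_le_iff_ne_zero.mpr hk
  have h1 : (1 : ℝ) < ((2 * k : ℕ) : ℝ) := by
    have : (2 : ℕ) ≤ 2 * k := by omega
    exact_mod_cast Nat.lt_of_lt_of_le Nat.one_lt_two this
  rw [realZeta_eq _ h1, ← (hasSum_zeta_nat hk).tsum_eq]
  congr 1
  ext n
  rw [Real.rpow_neg (Nat.cast_nonneg n), Real.rpow_natCast, one_div]

lemma realZeta_four : realZeta 4 = π ^ 4 / 90 := by
  have h := realZeta_val 2 (by norm_num)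
  rw [show ((2 * 2 : ℕ) : ℝ) = (4 : ℝ) by norm_num] at h
  rw [h, bernoulli_four]
  push_cast
  norm_num [Nat.factorial]
  ring

lemma realZeta_eight : realZeta 8 = π ^ 8 / 9450 := by
  have h := realZeta_val 4 (by norm_num)
  rw [show ((2 * 4 : ℕ) : ℝ) = (8 : ℝ) by norm_num] at h
  rw [h, bernoulli_eight]
  push_cast
  norm_num [Nat.factorial]
  ring

end Stmt10Aux

open Stmt10Aux

theorem stmt10 :
    realZeta 2 = Real.pi ^ 2 / Real.sqrt 105 *
      ∏' p : Nat.Primes,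
        (1 - 2 / (((p : ℕ) : ℝ) ^ (2 : ℝ) + ((p : ℕ) : ℝ) ^ (-(2 : ℝ)))) ^ (-(1 : ℝ) / 2) := by
  -- notation
  set m : Nat.Primes → ℝ := fun p => Real.sqrt (1 + ((p : ℕ) : ℝ) ^ (-(4 : ℝ))) with hm
  have hq2 : ∀ p : Nat.Primes, (2 : ℝ) ≤ ((p : ℕ) : ℝ) := fun p => by
    exact_mod_cast p.prop.two_le
  have hq0 : ∀ p : Nat.Primes, (0 : ℝ) ≤ ((p : ℕ) : ℝ) := fun p => le_trans (by norm_num) (hq2 p)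
  have hx_nonneg : ∀ p : Nat.Primes, (0 : ℝ) ≤ ((p : ℕ) : ℝ) ^ (-(4 : ℝ)) := fun p =>
    Real.rpow_nonneg (hq0 p) _
  have hm1 : ∀ p : Nat.Primes, (1 : ℝ) ≤ m p := fun p => by
    rw [hm]
    exact Real.one_le_sqrt.mpr (by linarith [hx_nonneg p])
  -- summability of logs and multipliability of m
  have hxsum : Summable (fun p : Nat.Primes => ((p : ℕ) : ℝ) ^ (-(4 : ℝ))) :=
    Nat.Primes.summable_rpow.mpr (by norm_num)
  have hlog : Summable fun p : Nat.Primes => Real.log (m p) := by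
    refine Summable.of_nonneg_of_le (fun p => Real.log_nonneg (hm1 p)) (fun p => ?_) hxsum
    have h1 : Real.log (m p) ≤ m p - 1 :=
      Real.log_le_sub_one_of_pos (lt_of_lt_of_le one_pos (hm1 p))
    have h2 : m p ≤ 1 + ((p : ℕ) : ℝ) ^ (-(4 : ℝ)) := by
      rw [hm]
      have := hx_nonneg p
      nlinarith [Real.sq_sqrt (by linarith : (0:ℝ) ≤ 1 + ((p : ℕ) : ℝ) ^ (-(4 : ℝ))),
        Real.sqrt_nonneg (1 + ((p : ℕ) : ℝ) ^ (-(4 : ℝ)))]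
    linarith
  have hM : Multipliable m := by
    have := Real.multipliable_of_summable_log (fun p => lt_of_lt_of_le one_pos (hm1 p)) hlog
    exact this
  set L : ℝ := ∏' p, m p with hL
  have hML : HasProd m L := hM.hasProd
  have hL1 : (1 : ℝ) ≤ L := by
    refine ge_of_tendsto' hML fun s => ?_
    calc (1 : ℝ) = ∏ _p ∈ s, 1 := by simp
      _ ≤ ∏ p ∈ s, m p :=
        Finset.prod_le_prod (fun _ _ => zero_le_one) (fun p _ => hm1 p)
  -- the square of m has product ζ(4)/ζ(8)
  have hz8 : realZeta 8 = π ^ 8 / 9450 := realZeta_eight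
  have hz4 : realZeta 4 = π ^ 4 / 90 := realZeta_four
  have hpi : (0 : ℝ) < π := Real.pi_pos
  have hz8ne : realZeta 8 ≠ 0 := by rw [hz8]; positivity
  have h48 : HasProd (fun p : Nat.Primes =>
      (1 - ((p : ℕ) : ℝ) ^ (-(4 : ℝ)))⁻¹ * (1 - ((p : ℕ) : ℝ) ^ (-(8 : ℝ)))⁻¹⁻¹)
      (realZeta 4 * (realZeta 8)⁻¹) :=
    (hasProd_euler 4 (by norm_num)).mul (hasProd_inv₀ (hasProd_euler 8 (by norm_num)) hz8ne)
  have hkey : ∀ p : Nat.Primes,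
      (1 - ((p : ℕ) : ℝ) ^ (-(4 : ℝ)))⁻¹ * (1 - ((p : ℕ) : ℝ) ^ (-(8 : ℝ)))⁻¹⁻¹ = m p * m p := by
    intro p
    set q : ℝ := ((p : ℕ) : ℝ) with hqdef
    have hq : (2 : ℝ) ≤ q := hq2 p
    have hq0' : (0 : ℝ) ≤ q := by linarith
    set t : ℝ := q ^ (-(4 : ℝ)) with ht
    have ht8 : q ^ (-(8 : ℝ)) = t ^ 2 := by
      rw [ht, ← Real.rpow_natCast (q ^ (-(4 : ℝ))) 2, ← Real.rpow_mul hq0']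
      norm_num
    have ht_lt : t < 1 := by
      rw [ht]
      have : q ^ (-(4 : ℝ)) < 1 := by
        apply Real.rpow_lt_one_of_one_lt_of_neg (by linarith) (by norm_num)
      exact this
    have ht_nonneg : 0 ≤ t := hx_nonneg p
    have hmm : m p * m p = 1 + t := by
      rw [hm]
      exact Real.mul_self_sqrt (by linarith)
    rw [inv_inv, ht8, hmm]
    have h1t : (1 : ℝ) - t ≠ 0 := by linarith
    field_simp
    ring
  have h48' : HasProd (fun p : Nat.Primes => m p * m p) (realZeta 4 * (realZeta 8)⁻¹) := by
    rw [show (fun p : Nat.Primes => m p * m p) = fun p : Nat.Primes =>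
      (1 - ((p : ℕ) : ℝ) ^ (-(4 : ℝ)))⁻¹ * (1 - ((p : ℕ) : ℝ) ^ (-(8 : ℝ)))⁻¹⁻¹ from
      funext fun p => (hkey p).symm]
    exact h48
  have hLL : L * L = 105 / π ^ 4 := by
    have h := (hML.mul hML).unique h48'
    rw [h, hz4, hz8]
    field_simp
    ring
  have hLval : L = Real.sqrt 105 / π ^ 2 := by
    have h0L : (0 : ℝ) ≤ L := by linarith
    have h := (Real.sqrt_mul_self h0L).symm
    rw [hLL] at h
    rw [h, show (105 : ℝ) / π ^ 4 = 105 / (π ^ 2) ^ 2 by ring,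
      Real.sqrt_div (by norm_num : (0:ℝ) ≤ 105), Real.sqrt_sq (by positivity)]
  -- the main product
  have hmain : HasProd (fun p : Nat.Primes =>
      (1 - 2 / (((p : ℕ) : ℝ) ^ (2 : ℝ) + ((p : ℕ) : ℝ) ^ (-(2 : ℝ)))) ^ (-(1 : ℝ) / 2))
      (realZeta 2 * L) := by
    have hpt : ∀ p : Nat.Primes, (1 - ((p : ℕ) : ℝ) ^ (-(2 : ℝ)))⁻¹ * m p =
        (1 - 2 / (((p : ℕ) : ℝ) ^ (2 : ℝ) + ((p : ℕ) : ℝ) ^ (-(2 : ℝ)))) ^ (-(1 : ℝ) / 2) := by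
      intro p
      set q : ℝ := ((p : ℕ) : ℝ) with hqdef
      have hq : (2 : ℝ) ≤ q := hq2 p
      have hq0' : (0 : ℝ) ≤ q := by linarith
      set a : ℝ := q ^ (2 : ℝ) with ha
      have ha1 : (1 : ℝ) < a := by
        rw [ha]
        exact (Real.one_lt_rpow_iff_of_pos (by linarith)).mpr (Or.inl ⟨by linarith, by norm_num⟩)
      have hinv2 : q ^ (-(2 : ℝ)) = a⁻¹ := by
        rw [ha, Real.rpow_neg hq0']
      have hinv4 : q ^ (-(4 : ℝ)) = (a⁻¹) ^ 2 := by
        rw [hinv2.symm, ← Real.rpow_natCast (q ^ (-(2 : ℝ))) 2, ← Real.rpow_mul hq0']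
        norm_num
      have hden_pos : (0 : ℝ) < a + a⁻¹ := by positivity
      have hden_gt : (2 : ℝ) < a + a⁻¹ := by
        have hane : a ≠ 0 := by positivity
        have key : a + a⁻¹ - 2 = a⁻¹ * (a - 1) ^ 2 := by field_simp; ring
        have hpos : 0 < a⁻¹ * (a - 1) ^ 2 := by
          have h1 : 0 < a⁻¹ := by positivity
          have h2 : 0 < (a - 1) ^ 2 := pow_pos (by linarith) 2
          positivity
        linarith
      have hB_pos : (0 : ℝ) < 1 - 2 / (a + a⁻¹) := by
        have : 2 / (a + a⁻¹) < 1 := (div_lt_one hden_pos).mpr hden_gt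
        linarith
      have hIa1 : (0 : ℝ) < 1 - a⁻¹ := by
        have : a⁻¹ < 1 := inv_lt_one_of_one_lt₀ ha1
        linarith
      have hLHS_nonneg : (0 : ℝ) ≤ (1 - a⁻¹)⁻¹ * Real.sqrt (1 + (a⁻¹) ^ 2) := by positivity
      have hane : a ≠ 0 := by linarith
      have ham1 : a - 1 ≠ 0 := by intro h; nlinarith
      have hsq : ((1 - a⁻¹)⁻¹ * Real.sqrt (1 + (a⁻¹) ^ 2)) ^ 2 = (1 - 2 / (a + a⁻¹))⁻¹ := by
        rw [mul_pow, Real.sq_sqrt (by positivity)]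
        have e1 : 1 - a⁻¹ = (a - 1) / a := by field_simp
        have e2 : 1 + a⁻¹ ^ 2 = (a ^ 2 + 1) / a ^ 2 := by field_simp
        have e3 : a + a⁻¹ = (a ^ 2 + 1) / a := by field_simp
        have hs1 : (a : ℝ) ^ 2 + 1 ≠ 0 := by positivity
        have hs2 : (a : ℝ) ^ 2 + 1 - 2 * a ≠ 0 := by
          intro h
          have : (a - 1) ^ 2 = 0 := by ring_nf; linarith [h]
          exact ham1 (pow_eq_zero_iff (n := 2) (by norm_num) |>.mp this)
        rw [e1, e2, e3]
        field_simp
        rw [eq_div_iff (by intro h; apply hs2; linarith)]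
        ring
      have hmp : m p = Real.sqrt (1 + (a⁻¹) ^ 2) := by
        have hrfl : m p = Real.sqrt (1 + q ^ (-(4 : ℝ))) := rfl
        rw [hrfl, hinv4]
      rw [hinv2, hmp]
      rw [show -(1 : ℝ) / 2 = -(1 / 2 : ℝ) by norm_num, Real.rpow_neg hB_pos.le,
        ← Real.sqrt_eq_rpow, ← Real.sqrt_inv, ← hsq, Real.sqrt_sq hLHS_nonneg]
    rw [show (fun p : Nat.Primes =>
        (1 - 2 / (((p : ℕ) : ℝ) ^ (2 : ℝ) + ((p : ℕ) : ℝ) ^ (-(2 : ℝ)))) ^ (-(1 : ℝ) / 2)) =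
        fun p : Nat.Primes => (1 - ((p : ℕ) : ℝ) ^ (-(2 : ℝ)))⁻¹ * m p from
      funext fun p => (hpt p).symm]
    exact (hasProd_euler 2 (by norm_num)).mul hML
  rw [hmain.tprod_eq, hLval]
  have h105 : Real.sqrt 105 ≠ 0 := by positivity
  have hpine : π ≠ 0 := ne_of_gt hpi
  field_simp
end

section
/- Let (t_n) be a strictly increasing sequence of positive reals with t_n → ∞ such that Z(s) = Σ_{n≥1} t_n^{-s} converges for all real s > 1. Then for every n ≥ 0, the limit as real s → ∞ of (Z(s) - Σ_{k=1}^{n} t_k^{-s})^{-1/s} equals t_{n+1}. -/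
set_option maxHeartbeats 1000000


open Filter Topology

theorem stmt16 (t : ℕ → ℝ) (hpos : ∀ n, 0 < t n) (hmono : StrictMono t)
    (htop : Tendsto t atTop atTop)
    (hsum : ∀ s : ℝ, 1 < s → Summable fun n : ℕ => t n ^ (-s)) (n : ℕ) :
    Tendsto
      (fun s : ℝ =>
        ((∑' k : ℕ, t k ^ (-s)) - ∑ k ∈ Finset.range n, t k ^ (-s)) ^ (-1 / s))
      atTop (𝓝 (t n)) := by
  have h2 : Summable (fun k : ℕ => t (k + n) ^ (-(2:ℝ))) :=
    (summable_nat_add_iff n).mpr (hsum 2 one_lt_two)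
  set C : ℝ := ∑' k : ℕ, t (k + n) ^ (-(2:ℝ)) with hCdef
  have hC : 0 < C := by
    refine Summable.tsum_pos h2 (fun i => Real.rpow_nonneg (hpos _).le _) 0 ?_
    exact Real.rpow_pos_of_pos (hpos _) _
  -- limits of exponents
  have e1 : Tendsto (fun s : ℝ => -1 / s) atTop (𝓝 0) := by
    have := (tendsto_inv_atTop_zero : Tendsto (fun r:ℝ => r⁻¹) atTop (𝓝 0))
    have h := this.neg
    simpa [neg_div, one_div] using h
  have e2 : Tendsto (fun s : ℝ => (2 - s) * (-1 / s)) atTop (𝓝 1) := by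
    have h : Tendsto (fun s : ℝ => 1 - 2 * s⁻¹) atTop (𝓝 (1 - 2 * 0)) :=
      tendsto_const_nhds.sub (((tendsto_inv_atTop_zero : Tendsto (fun r:ℝ => r⁻¹) atTop (𝓝 0))).const_mul 2)
    rw [mul_zero, sub_zero] at h
    refine h.congr' ?_
    filter_upwards [eventually_gt_atTop (0:ℝ)] with s hs
    field_simp
    ring
  have lo_tendsto : Tendsto (fun s : ℝ => (C * t n ^ (2 - s)) ^ (-1 / s)) atTop (𝓝 (t n)) := by
    have hEq : (fun s : ℝ => (C * t n ^ (2 - s)) ^ (-1 / s))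
        = fun s : ℝ => C ^ (-1 / s) * t n ^ ((2 - s) * (-1 / s)) := by
      funext s
      rw [Real.mul_rpow hC.le (Real.rpow_nonneg (hpos n).le _),
        ← Real.rpow_mul (hpos n).le]
    rw [hEq]
    have hc : Tendsto (fun s : ℝ => C ^ (-1 / s)) atTop (𝓝 1) := by
      have := (Real.continuousAt_const_rpow (a := C) (b := 0) hC.ne').tendsto.comp e1
      simpa [Real.rpow_zero, Function.comp_def] using this
    have ht : Tendsto (fun s : ℝ => t n ^ ((2 - s) * (-1 / s))) atTop (𝓝 (t n)) := by
      have := (Real.continuousAt_const_rpow (a := t n) (b := 1) (hpos n).ne').tendsto.comp e2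
      simpa [Real.rpow_one, Function.comp_def] using this
    simpa using hc.mul ht
  refine tendsto_of_tendsto_of_tendsto_of_le_of_le' lo_tendsto tendsto_const_nhds ?_ ?_
  · -- lower bound
    filter_upwards [eventually_ge_atTop (2:ℝ)] with s hs
    have hs1 : (1:ℝ) < s := by linarith
    have hs0 : (0:ℝ) < s := by linarith
    have hsumS : Summable (fun k : ℕ => t (k + n) ^ (-s)) :=
      (summable_nat_add_iff n).mpr (hsum s hs1)
    have hrw : (∑' k : ℕ, t k ^ (-s)) - ∑ k ∈ Finset.range n, t k ^ (-s)
        = ∑' k : ℕ, t (k + n) ^ (-s) := by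
      have := Summable.sum_add_tsum_nat_add n (hsum s hs1)
      linarith
    rw [hrw]
    have hTpos : 0 < ∑' k : ℕ, t (k + n) ^ (-s) := by
      refine Summable.tsum_pos hsumS (fun i => Real.rpow_nonneg (hpos _).le _) 0 ?_
      exact Real.rpow_pos_of_pos (hpos _) _
    have hThigh : (∑' k : ℕ, t (k + n) ^ (-s)) ≤ C * t n ^ (2 - s) := by
      have hterm : ∀ k : ℕ, t (k + n) ^ (-s) ≤ t (k + n) ^ (-(2:ℝ)) * t n ^ (2 - s) := by
        intro k
        have hsplit : t (k + n) ^ (-s) = t (k + n) ^ (-(2:ℝ)) * t (k + n) ^ (2 - s) := by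
          rw [← Real.rpow_add (hpos _)]; ring_nf
        rw [hsplit]
        refine mul_le_mul_of_nonneg_left ?_ (Real.rpow_nonneg (hpos _).le _)
        exact Real.rpow_le_rpow_of_nonpos (hpos n) (hmono.monotone (Nat.le_add_left n k))
          (by linarith)
      calc (∑' k : ℕ, t (k + n) ^ (-s))
          ≤ ∑' k : ℕ, t (k + n) ^ (-(2:ℝ)) * t n ^ (2 - s) :=
            Summable.tsum_le_tsum hterm hsumS (h2.mul_right _)
        _ = C * t n ^ (2 - s) := by rw [tsum_mul_right]
    exact Real.rpow_le_rpow_of_nonpos hTpos hThigh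
      (by rw [neg_div]; exact neg_nonpos.mpr (by positivity))
  · -- upper bound
    filter_upwards [eventually_ge_atTop (2:ℝ)] with s hs
    have hs1 : (1:ℝ) < s := by linarith
    have hs0 : (0:ℝ) < s := by linarith
    have hsumS : Summable (fun k : ℕ => t (k + n) ^ (-s)) :=
      (summable_nat_add_iff n).mpr (hsum s hs1)
    have hrw : (∑' k : ℕ, t k ^ (-s)) - ∑ k ∈ Finset.range n, t k ^ (-s)
        = ∑' k : ℕ, t (k + n) ^ (-s) := by
      have := Summable.sum_add_tsum_nat_add n (hsum s hs1)
      linarith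
    rw [hrw]
    have hTlow : t n ^ (-s) ≤ ∑' k : ℕ, t (k + n) ^ (-s) := by
      have := Summable.le_tsum hsumS 0 (fun i _ => Real.rpow_nonneg (hpos _).le _)
      simpa using this
    have : (∑' k : ℕ, t (k + n) ^ (-s)) ^ (-1 / s) ≤ (t n ^ (-s)) ^ (-1 / s) :=
      Real.rpow_le_rpow_of_nonpos (Real.rpow_pos_of_pos (hpos n) _) hTlow
        (by rw [neg_div]; exact neg_nonpos.mpr (by positivity))
    calc (∑' k : ℕ, t (k + n) ^ (-s)) ^ (-1 / s) ≤ (t n ^ (-s)) ^ (-1 / s) := this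
      _ = t n := by
        rw [← Real.rpow_mul (hpos n).le]
        rw [show (-s) * (-1 / s) = 1 by field_simp]
        exact Real.rpow_one _
end

section
/- Let a_1 < a_2 < ... be a strictly increasing sequence of reals with a_1 > 1 and a_n → ∞, and suppose F(s) = ∏_{n≥1} (1 - a_n^{-s})^{-1} converges for real s > 1. Define Q_n(s) = ∏_{k=1}^{n} (1 - a_k^{-s})^{-1}. Then for every n ≥ 0, lim_{s→∞} (1 - Q_n(s)/F(s))^{-1/s} = a_{n+1}. -/
open Filter Topology

set_option maxHeartbeats 1000000

private lemma aux_one_le_prod {f : ℕ → ℝ} (hf : ∀ i, 1 ≤ f i) (G : Finset ℕ) :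
    (1:ℝ) ≤ ∏ i ∈ G, f i := by
  calc (1:ℝ) = ∏ _i ∈ G, (1:ℝ) := by simp
  _ ≤ ∏ i ∈ G, f i := Finset.prod_le_prod (by intros; norm_num) (fun i _ => hf i)

private lemma aux_mono {f : ℕ → ℝ} (hf : ∀ i, 1 ≤ f i) :
    Monotone (fun G : Finset ℕ => ∏ i ∈ G, f i) := by
  intro G G' h
  simp only
  rw [← Finset.prod_sdiff h]
  have h1 : (1:ℝ) ≤ ∏ i ∈ G' \ G, f i := aux_one_le_prod hf _
  have h2 : (0:ℝ) ≤ ∏ i ∈ G, f i :=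
    Finset.prod_nonneg fun i _ => le_trans zero_le_one (hf i)
  nlinarith

private lemma aux_prod_le_hasProd {f : ℕ → ℝ} {L : ℝ} (hf : ∀ i, 1 ≤ f i)
    (h : HasProd f L) (G : Finset ℕ) : ∏ i ∈ G, f i ≤ L :=
  ge_of_tendsto h (Filter.eventually_atTop.2 ⟨G, fun _ hG' => aux_mono hf hG'⟩)

private lemma aux_one_sub_sum_le_prod (x : ℕ → ℝ) (h0 : ∀ i, 0 ≤ x i) (h1 : ∀ i, x i ≤ 1)
    (F : Finset ℕ) : 1 - ∑ i ∈ F, x i ≤ ∏ i ∈ F, (1 - x i) := by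
  classical
  induction F using Finset.cons_induction with
  | empty => simp
  | cons a F ha ih =>
    rw [Finset.prod_cons, Finset.sum_cons]
    have hS : 0 ≤ ∑ i ∈ F, x i := Finset.sum_nonneg fun i _ => h0 i
    nlinarith [mul_le_mul_of_nonneg_left ih (by linarith [h1 a] : (0:ℝ) ≤ 1 - x a),
      mul_nonneg (h0 a) hS]

private lemma aux_one_add_sum_le_prod (x : ℕ → ℝ) (h0 : ∀ i, 0 ≤ x i)
    (F : Finset ℕ) : 1 + ∑ i ∈ F, x i ≤ ∏ i ∈ F, (1 + x i) := by
  classical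
  induction F using Finset.cons_induction with
  | empty => simp
  | cons a F ha ih =>
    rw [Finset.prod_cons, Finset.sum_cons]
    have hS : 0 ≤ ∑ i ∈ F, x i := Finset.sum_nonneg fun i _ => h0 i
    nlinarith [mul_le_mul_of_nonneg_left ih (by linarith [h0 a] : (0:ℝ) ≤ 1 + x a),
      mul_nonneg (h0 a) hS]

private lemma aux_one_add_le_inv {x : ℝ} (h0 : 0 ≤ x) (h1 : x < 1) :
    1 + x ≤ (1 - x)⁻¹ := by
  have h3 : 0 < 1 - x := by linarith
  rw [inv_eq_one_div, le_div_iff₀ h3]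
  nlinarith

theorem stmt17 (a : ℕ → ℝ) (h1 : 1 < a 0) (hmono : StrictMono a)
    (htop : Tendsto a atTop atTop)
    (hprod : ∀ s : ℝ, 1 < s → Multipliable fun n : ℕ => (1 - a n ^ (-s))⁻¹) (n : ℕ) :
    Tendsto
      (fun s : ℝ =>
        (1 - (∏ k ∈ Finset.range n, (1 - a k ^ (-s))⁻¹) /
            (∏' k : ℕ, (1 - a k ^ (-s))⁻¹)) ^ (-1 / s))
      atTop (𝓝 (a n)) := by
  have ha1 : ∀ k, 1 < a k := fun k => lt_of_lt_of_le h1 (hmono.monotone (Nat.zero_le k))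
  have hapos : ∀ k, 0 < a k := fun k => lt_trans zero_lt_one (ha1 k)
  have han : 1 < a n := ha1 n
  have han1 : 1 < a (n+1) := ha1 (n+1)
  -- summability of a k ^ (-2)
  have hsum2 : Summable (fun k => a k ^ (-(2:ℝ))) := by
    have hm2 := hprod 2 one_lt_two
    have hx2pos : ∀ k, 0 < a k ^ (-(2:ℝ)) := fun k => Real.rpow_pos_of_pos (hapos k) _
    have hx2lt : ∀ k, a k ^ (-(2:ℝ)) < 1 := fun k =>
      Real.rpow_lt_one_of_one_lt_of_neg (ha1 k) (by norm_num)
    have hge1 : ∀ k, (1:ℝ) ≤ (1 - a k ^ (-(2:ℝ)))⁻¹ := by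
      intro k
      calc (1:ℝ) ≤ 1 + a k ^ (-(2:ℝ)) := by linarith [hx2pos k]
      _ ≤ _ := aux_one_add_le_inv (hx2pos k).le (hx2lt k)
    refine summable_of_sum_range_le (c := (∏' k, (1 - a k ^ (-(2:ℝ)))⁻¹) - 1) (fun k => (hx2pos k).le) (fun m => ?_)
    have h4 : 1 + ∑ i ∈ Finset.range m, a i ^ (-(2:ℝ))
        ≤ ∏ i ∈ Finset.range m, (1 + a i ^ (-(2:ℝ))) :=
      aux_one_add_sum_le_prod _ (fun i => (hx2pos i).le) _
    have h5 : ∏ i ∈ Finset.range m, (1 + a i ^ (-(2:ℝ)))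
        ≤ ∏ i ∈ Finset.range m, (1 - a i ^ (-(2:ℝ)))⁻¹ :=
      Finset.prod_le_prod (fun i _ => by linarith [hx2pos i])
        (fun i _ => aux_one_add_le_inv (hx2pos i).le (hx2lt i))
    have h6 : ∏ i ∈ Finset.range m, (1 - a i ^ (-(2:ℝ)))⁻¹
        ≤ ∏' k, (1 - a k ^ (-(2:ℝ)))⁻¹ :=
      aux_prod_le_hasProd hge1 hm2.hasProd _
    linarith
  have hsum2' : Summable (fun k => a (k + (n+1)) ^ (-(2:ℝ))) :=
    (summable_nat_add_iff (n+1)).2 hsum2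
  set C : ℝ := ∑' k, a (k + (n+1)) ^ (-(2:ℝ)) with hC
  have hCnonneg : 0 ≤ C :=
    tsum_nonneg fun k => (Real.rpow_pos_of_pos (hapos _) _).le
  -- key bounds for each s ≥ 2
  have key : ∀ s : ℝ, 2 ≤ s →
      a n ^ (-s) ≤ (1 - (∏ k ∈ Finset.range n, (1 - a k ^ (-s))⁻¹) /
            (∏' k : ℕ, (1 - a k ^ (-s))⁻¹)) ∧
      (1 - (∏ k ∈ Finset.range n, (1 - a k ^ (-s))⁻¹) /
            (∏' k : ℕ, (1 - a k ^ (-s))⁻¹)) ≤ a n ^ (-s) + a (n+1) ^ (2 - s) * C := by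
    intro s hs
    have hs1 : (1:ℝ) < s := by linarith
    have hxpos : ∀ k, 0 < a k ^ (-s) := fun k => Real.rpow_pos_of_pos (hapos k) _
    have hxlt : ∀ k, a k ^ (-s) < 1 := fun k =>
      Real.rpow_lt_one_of_one_lt_of_neg (ha1 k) (by linarith)
    have h1x : ∀ k, 0 < 1 - a k ^ (-s) := fun k => by linarith [hxlt k]
    have hf := hprod s hs1
    set f : ℕ → ℝ := fun k => (1 - a k ^ (-s))⁻¹ with hfdef
    have hfge1 : ∀ k, (1:ℝ) ≤ f k := by
      intro k
      calc (1:ℝ) ≤ 1 + a k ^ (-s) := by linarith [hxpos k]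
      _ ≤ _ := aux_one_add_le_inv (hxpos k).le (hxlt k)
    have hfpos : ∀ k, 0 < f k := fun k => lt_of_lt_of_le zero_lt_one (hfge1 k)
    -- summability of x at s
    have hxle2 : ∀ k, a k ^ (-s) ≤ a k ^ (-(2:ℝ)) := fun k =>
      Real.rpow_le_rpow_of_exponent_le (ha1 k).le (by linarith)
    have hsumx : Summable (fun k => a k ^ (-s)) :=
      Summable.of_nonneg_of_le (fun k => (hxpos k).le) hxle2 hsum2
    have hsumx' : Summable (fun k => a (k + n) ^ (-s)) :=
      (summable_nat_add_iff n).2 hsumx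
    -- multipliability of the shifted f
    have hf' : Multipliable (fun k => f (k + n)) := by
      refine ⟨_, tendsto_atTop_ciSup (aux_mono (fun i => hfge1 _))
        ⟨∏' k, f k, ?_⟩⟩
      rintro _ ⟨G, rfl⟩
      show ∏ i ∈ G, f (i + n) ≤ ∏' k, f k
      have himg : ∏ i ∈ G, f (i + n) = ∏ i ∈ G.image (· + n), f i := by
        rw [Finset.prod_image (by intro x _ y _ h; simp only at h; omega)]
      rw [himg]
      exact aux_prod_le_hasProd hfge1 hf.hasProd _
    have hQF : (∏ k ∈ Finset.range n, f k) * (∏' k, f (k + n)) = ∏' k, f k :=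
      Multipliable.prod_mul_tprod_nat_mul' hf'
    -- multipliability of g
    set g : ℕ → ℝ := fun k => 1 - a (k + n) ^ (-s) with hgdef
    have hgpos : ∀ k, 0 < g k := fun k => h1x _
    have hgle1 : ∀ k, g k ≤ 1 := fun k => by
      simp only [hgdef]; linarith [hxpos (k + n)]
    have hganti : Antitone (fun G : Finset ℕ => ∏ i ∈ G, g i) := by
      intro G G' h
      simp only
      rw [← Finset.prod_sdiff h]
      have h1' : ∏ i ∈ G' \ G, g i ≤ 1 :=
        Finset.prod_le_one (fun i _ => (hgpos i).le) (fun i _ => hgle1 i)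
      have h2' : (0:ℝ) ≤ ∏ i ∈ G, g i := Finset.prod_nonneg fun i _ => (hgpos i).le
      nlinarith [Finset.prod_nonneg (fun i (_ : i ∈ G' \ G) => (hgpos i).le)]
    have hgm : Multipliable g := by
      refine ⟨_, tendsto_atTop_ciInf hganti ⟨0, ?_⟩⟩
      rintro _ ⟨G, rfl⟩
      exact Finset.prod_nonneg fun i _ => (hgpos i).le
    -- F' * P = 1
    have hFP : (∏' k, f (k + n)) * (∏' k, g k) = 1 := by
      have hmul := hf'.hasProd.mul hgm.hasProd
      have he : (fun k => f (k + n) * g k) = fun _ => (1:ℝ) := by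
        funext k
        simp only [hfdef, hgdef]
        exact inv_mul_cancel₀ (ne_of_gt (h1x (k + n)))
      rw [he] at hmul
      exact hmul.unique hasProd_one
    -- positivity
    have hQpos : 0 < ∏ k ∈ Finset.range n, f k :=
      Finset.prod_pos fun k _ => hfpos k
    have hF'ge1 : (1:ℝ) ≤ ∏' k, f (k + n) :=
      ge_of_tendsto' hf'.hasProd fun G => aux_one_le_prod (fun i => hfge1 _) _
    have hQFne : (∏ k ∈ Finset.range n, f k) * (∏' k, f (k + n)) ≠ 0 := by
      positivity
    -- the expression equals 1 - P
    have hE : (∏ k ∈ Finset.range n, f k) / (∏' k, f k) = ∏' k, g k := by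
      rw [← hQF, div_eq_iff hQFne,
        mul_comm (∏' k, g k) ((∏ k ∈ Finset.range n, f k) * (∏' k, f (k + n))),
        mul_assoc, hFP, mul_one]
    rw [hE]
    -- bounds on P = ∏' g
    have hPle : (∏' k, g k) ≤ g 0 := by
      refine le_of_tendsto hgm.hasProd (Filter.eventually_atTop.2 ⟨{0}, fun G hG => ?_⟩)
      rw [← Finset.prod_sdiff hG, Finset.prod_singleton]
      have h1' : ∏ i ∈ G \ {0}, g i ≤ 1 :=
        Finset.prod_le_one (fun i _ => (hgpos i).le) (fun i _ => hgle1 i)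
      nlinarith [Finset.prod_nonneg (fun i (_ : i ∈ G \ {0}) => (hgpos i).le), hgpos 0]
    have hPge : 1 - (∑' k, a (k + n) ^ (-s)) ≤ ∏' k, g k := by
      refine ge_of_tendsto' hgm.hasProd fun G => ?_
      have h7 : ∑ i ∈ G, a (i + n) ^ (-s) ≤ ∑' k, a (k + n) ^ (-s) :=
        Summable.sum_le_tsum G (fun i _ => (hxpos _).le) hsumx'
      have h8 : 1 - ∑ i ∈ G, a (i + n) ^ (-s) ≤ ∏ i ∈ G, (1 - a (i + n) ^ (-s)) :=
        aux_one_sub_sum_le_prod _ (fun i => (hxpos _).le) (fun i => (hxlt _).le) G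
      simp only [hgdef]
      linarith
    constructor
    · -- lower bound
      have : g 0 = 1 - a n ^ (-s) := by simp [hgdef]
      rw [this] at hPle
      linarith
    · -- upper bound
      have hsplit : (∑' k, a (k + n) ^ (-s))
          = a n ^ (-s) + ∑' k, a (k + 1 + n) ^ (-s) := by
        rw [Summable.tsum_eq_zero_add hsumx']
        simp
      have hterm : ∀ k, a (k + 1 + n) ^ (-s)
          ≤ a (n+1) ^ (2 - s) * a (k + (n+1)) ^ (-(2:ℝ)) := by
        intro k
        have hidx : k + 1 + n = k + (n+1) := by omega
        rw [hidx]
        have hb : a (n+1) ≤ a (k + (n+1)) := hmono.monotone (by omega)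
        have h9 : a (k + (n+1)) ^ (2 - s) ≤ a (n+1) ^ (2 - s) :=
          Real.rpow_le_rpow_of_nonpos (hapos _) hb (by linarith)
        have h10 : a (k + (n+1)) ^ (-s)
            = a (k + (n+1)) ^ (2 - s) * a (k + (n+1)) ^ (-(2:ℝ)) := by
          rw [← Real.rpow_add (hapos _)]
          congr 1
          ring
        rw [h10]
        exact mul_le_mul_of_nonneg_right h9 (Real.rpow_pos_of_pos (hapos _) _).le
      have hsum_shift : Summable (fun k => a (k + 1 + n) ^ (-s)) := by
        have : Summable (fun k => a (k + (n+1)) ^ (-s)) :=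
          (summable_nat_add_iff (n+1)).2 hsumx
        refine this.congr fun k => ?_
        congr 2
        omega
      have hsum_rhs : Summable (fun k => a (n+1) ^ (2 - s) * a (k + (n+1)) ^ (-(2:ℝ))) :=
        hsum2'.mul_left _
      have h11 : (∑' k, a (k + 1 + n) ^ (-s))
          ≤ ∑' k, a (n+1) ^ (2 - s) * a (k + (n+1)) ^ (-(2:ℝ)) :=
        Summable.tsum_le_tsum hterm hsum_shift hsum_rhs
      rw [tsum_mul_left] at h11
      linarith
  -- ρ and the eventual comparison
  set ρ : ℝ := a n / a (n+1) with hρdef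
  have hρpos : 0 < ρ := div_pos (hapos n) (hapos (n+1))
  have hρlt : ρ < 1 := (div_lt_one (hapos (n+1))).2 (hmono (by omega))
  have htend0 : Tendsto (fun s : ℝ => C * a (n+1) ^ ((2:ℝ)) * ρ ^ s) atTop (𝓝 0) := by
    have := tendsto_rpow_atTop_of_base_lt_one ρ (by linarith) hρlt
    have h := this.const_mul (C * a (n+1) ^ ((2:ℝ)))
    simpa using h
  have hev1 : ∀ᶠ s : ℝ in atTop, C * a (n+1) ^ ((2:ℝ)) * ρ ^ s ≤ 1 :=
    (htend0.eventually_lt_const one_pos).mono fun s h => h.le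
  -- eventual two-sided bounds for the main expression
  have hup : ∀ᶠ s : ℝ in atTop,
      (1 - (∏ k ∈ Finset.range n, (1 - a k ^ (-s))⁻¹) /
          (∏' k : ℕ, (1 - a k ^ (-s))⁻¹)) ^ (-1 / s) ≤ a n := by
    filter_upwards [eventually_ge_atTop (2:ℝ)] with s hs
    obtain ⟨hlo, _⟩ := key s hs
    have hspos : 0 < s := by linarith
    have hAp : 0 < a n ^ (-s) := Real.rpow_pos_of_pos (hapos n) _
    have h12 : (1 - (∏ k ∈ Finset.range n, (1 - a k ^ (-s))⁻¹) /
          (∏' k : ℕ, (1 - a k ^ (-s))⁻¹)) ^ (-1 / s) ≤ (a n ^ (-s)) ^ (-1 / s) :=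
      Real.rpow_le_rpow_of_nonpos hAp hlo
        (by rw [neg_div]; exact neg_nonpos.2 (by positivity))
    have h13 : (a n ^ (-s)) ^ (-1 / s) = a n := by
      rw [← Real.rpow_mul (hapos n).le,
        show (-s) * (-1/s) = 1 by rw [neg_div, neg_mul_neg, mul_one_div, div_self hspos.ne'],
        Real.rpow_one]
    calc _ ≤ (a n ^ (-s)) ^ (-1 / s) := h12
    _ = a n := h13
  have hlo : ∀ᶠ s : ℝ in atTop,
      (2:ℝ) ^ (-1 / s) * a n ≤
      (1 - (∏ k ∈ Finset.range n, (1 - a k ^ (-s))⁻¹) /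
          (∏' k : ℕ, (1 - a k ^ (-s))⁻¹)) ^ (-1 / s) := by
    filter_upwards [eventually_ge_atTop (2:ℝ), hev1] with s hs hev
    obtain ⟨hlo', hup'⟩ := key s hs
    have hspos : 0 < s := by linarith
    have hAp : 0 < a n ^ (-s) := Real.rpow_pos_of_pos (hapos n) _
    -- a (n+1) ^ (2 - s) * C ≤ a n ^ (-s)
    have hid : a (n+1) ^ (2 - s) * C = (C * a (n+1) ^ ((2:ℝ)) * ρ ^ s) * a n ^ (-s) := by
      rw [hρdef, Real.div_rpow (hapos n).le (hapos (n+1)).le,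
        Real.rpow_sub (hapos (n+1)), Real.rpow_neg (hapos n).le]
      have hne1 : a n ^ s ≠ 0 := (Real.rpow_pos_of_pos (hapos n) s).ne'
      have hne2 : a (n+1) ^ s ≠ 0 := (Real.rpow_pos_of_pos (hapos (n+1)) s).ne'
      field_simp
    have hcmp : a (n+1) ^ (2 - s) * C ≤ a n ^ (-s) := by
      rw [hid]
      nlinarith
    have hE2 : (1 - (∏ k ∈ Finset.range n, (1 - a k ^ (-s))⁻¹) /
          (∏' k : ℕ, (1 - a k ^ (-s))⁻¹)) ≤ 2 * a n ^ (-s) := by linarith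
    have h14 : (2 * a n ^ (-s)) ^ (-1 / s) ≤
        (1 - (∏ k ∈ Finset.range n, (1 - a k ^ (-s))⁻¹) /
          (∏' k : ℕ, (1 - a k ^ (-s))⁻¹)) ^ (-1 / s) :=
      Real.rpow_le_rpow_of_nonpos (by linarith) hE2
        (by rw [neg_div]; exact neg_nonpos.2 (by positivity))
    have h15 : (2 * a n ^ (-s)) ^ (-1 / s) = (2:ℝ) ^ (-1 / s) * a n := by
      rw [Real.mul_rpow (by norm_num) hAp.le]
      congr 1
      rw [← Real.rpow_mul (hapos n).le,
        show (-s) * (-1/s) = 1 by rw [neg_div, neg_mul_neg, mul_one_div, div_self hspos.ne'],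
        Real.rpow_one]
    rw [← h15]
    exact h14
  -- limits of the bounding functions
  have htwo : Tendsto (fun s : ℝ => (2:ℝ) ^ (-1 / s) * a n) atTop (𝓝 (a n)) := by
    have hexp : Tendsto (fun s : ℝ => -1 / s) atTop (𝓝 0) := by
      have := tendsto_inv_atTop_zero (𝕜 := ℝ)
      have h := this.const_mul (-1 : ℝ)
      simpa [div_eq_mul_inv] using h
    have hcont : ContinuousAt (fun t : ℝ => (2:ℝ) ^ t) 0 :=
      Real.continuousAt_const_rpow (by norm_num)
    have h2 : Tendsto (fun s : ℝ => (2:ℝ) ^ (-1 / s)) atTop (𝓝 ((2:ℝ) ^ (0:ℝ))) :=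
      (hcont.tendsto).comp hexp
    rw [Real.rpow_zero] at h2
    have := h2.mul_const (a n)
    simpa using this
  exact tendsto_of_tendsto_of_tendsto_of_le_of_le' htwo tendsto_const_nhds hlo hup
end
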